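/- Let n ≥ 2 be an even natural number and 0 < Ω ≤ 1, and set r = 2·Ω^{−1/n}. Then the minimum of the Lyapunov function V over the Euclidean circle { (x₁, x₂) ∈ ℝ² : x₁² + x₂² = r² } equals 4n/( (n+1)²·Ω^{1/n} ), and it is attained at the point (r, 0). -/

import Mathlib

/-- The Lyapunov function
V(x₁,x₂) = −(2Ω/(n+1)²)((x₁ − Ω^{−1/n})^{n+1} + Ω^{−(n+1)/n}) + (2/(n+1))x₁ + x₂². -/
noncomputable def lyapV (n : ℕ) (Ω : ℝ) (x₁ x₂ : ℝ) : ℝ :=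
  -(2 * Ω / ((n : ℝ) + 1) ^ 2) *
      ((x₁ - Ω ^ (-1 / (n : ℝ))) ^ (n + 1) + Ω ^ (-((n : ℝ) + 1) / (n : ℝ)))
    + (2 / ((n : ℝ) + 1)) * x₁ + x₂ ^ 2

lemma keyS (k : ℕ) : ∀ a : ℝ, -3 ≤ a → a ≤ 1 →
    2 * ((2*k+3 : ℕ) : ℝ) ≤ 2 * (∑ i ∈ Finset.range (2*k+3), a ^ i) + ((2*k+3 : ℕ) : ℝ)^2 * (3 + a) := by
  induction k with
  | zero =>
    intro a h1 h2
    norm_num [Finset.sum_range_succ]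
    nlinarith [sq_nonneg (2*a + 11/2)]
  | succ k ih =>
    intro a h1 h2
    have ihh := ih a h1 h2
    have hsum : (∑ i ∈ Finset.range (2*(k+1)+3), a ^ i)
        = (∑ i ∈ Finset.range (2*k+3), a ^ i) + a^(2*k+3) * (1 + a) := by
      have : 2*(k+1)+3 = (2*k+3) + 1 + 1 := by ring
      rw [this, Finset.sum_range_succ, Finset.sum_range_succ]
      ring
    rw [hsum]
    push_cast
    push_cast at ihh
    -- need : 2*a^(2k+3)*(1+a) + (4m+4)(3+a) ≥ 4 with m = 2k+3
    have hk0 : (0:ℝ) ≤ (k:ℝ) := Nat.cast_nonneg k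
    have hm : (3 : ℝ) ≤ 2*(k:ℝ)+3 := by linarith
    rcases le_or_gt (-1) a with hc | hc
    · have habs : |a^(2*k+3)| ≤ 1 := by
        rw [abs_pow]
        exact pow_le_one₀ (abs_nonneg a) (abs_le.2 ⟨by linarith, by linarith⟩)
      have h3 := (abs_le.1 habs).1
      nlinarith [mul_nonneg (by linarith : (0:ℝ) ≤ 1 + a) (by linarith : (0:ℝ) ≤ (a^(2*k+3)) + 1)]
    · set b := -a with hb
      have hb1 : 1 ≤ b := by simp [hb]; linarith
      have hb3 : b ≤ 3 := by simp [hb]; linarith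
      have hpow : a^(2*k+3) = -(b^(2*k+3)) := by
        have : a = -b := by simp [hb]
        rw [this, Odd.neg_pow ⟨k+1, by ring⟩]
      have hb3le : b^3 ≤ b^(2*k+3) := pow_le_pow_right₀ hb1 (by omega)
      have hbb : (0:ℝ) ≤ b^3 := by positivity
      rw [hpow]
      have key : 2*(b^3)*(b-1) + 16*(3-b) ≥ 4 := by nlinarith [sq_nonneg (b-2), sq_nonneg b, mul_nonneg hbb (by linarith : (0:ℝ) ≤ b-1)]
      nlinarith [mul_le_mul_of_nonneg_right hb3le (by linarith : (0:ℝ) ≤ b - 1)]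

lemma keyF (n : ℕ) (hn : 2 ≤ n) (hne : Even n) (a : ℝ) (h1 : -3 ≤ a) (h2 : a ≤ 1) :
    0 ≤ 2*((n:ℝ)+1)*(a-1) + ((n:ℝ)+1)^2*(3+a)*(1-a) + 2*(1 - a^(n+1)) := by
  obtain ⟨j, hj⟩ := hne
  have hj1 : 1 ≤ j := by omega
  obtain ⟨k, hk⟩ : ∃ k, j = k + 1 := ⟨j - 1, by omega⟩
  have hnk : n = 2*k+2 := by omega
  subst hnk
  have hG := keyS k a h1 h2
  set S := ∑ i ∈ Finset.range (2*k+3), a ^ i with hS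
  have hgeo : S * (a - 1) = a^(2*k+3) - 1 := geom_sum_mul a (2*k+3)
  have hm : ((2*k+2 : ℕ):ℝ) + 1 = ((2*k+3 : ℕ):ℝ) := by push_cast; ring
  have h1a : (0:ℝ) ≤ 1 - a := by linarith
  have hprod : 0 ≤ (1-a) * (2*S + ((2*k+3 : ℕ):ℝ)^2*(3+a) - 2*((2*k+3:ℕ):ℝ)) :=
    mul_nonneg h1a (by linarith)
  have hexp : 2*k+2+1 = 2*k+3 := by omega
  rw [hexp, hm]
  have heq : 2*((2*k+3:ℕ):ℝ)*(a-1) + ((2*k+3:ℕ):ℝ)^2*(3+a)*(1-a) + 2*(1 - a^(2*k+3))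
      = (1-a) * (2*S + ((2*k+3 : ℕ):ℝ)^2*(3+a) - 2*((2*k+3:ℕ):ℝ)) := by
    linear_combination (2 : ℝ) * hgeo
  rw [heq]; exact hprod

lemma keyE (n : ℕ) (hn : 2 ≤ n) (hne : Even n) (s a : ℝ) (hs : 1 ≤ s)
    (ha1 : -3 ≤ a) (ha2 : a ≤ 1) :
    0 ≤ 2*s^(n+1)*(((n:ℝ)+1)*(a-1) + (1 - a^(n+1))) + s^(n+2)*(((n:ℝ)+1)^2*(3+a)*(1-a)) := by
  have hF := keyF n hn hne a ha1 ha2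
  have hp1 : (0:ℝ) ≤ s^(n+1) := by positivity
  have hmono : s^(n+1) ≤ s^(n+2) := pow_le_pow_right₀ hs (by omega)
  have hq : 0 ≤ ((n:ℝ)+1)^2*(3+a)*(1-a) :=
    mul_nonneg (mul_nonneg (by positivity) (by linarith)) (by linarith)
  nlinarith [mul_nonneg hp1 hF, mul_le_mul_of_nonneg_right hmono hq]


/-- For n ≥ 2 even and 0 < Ω ≤ 1, with r = 2Ω^{−1/n}, the
minimum of V over the circle x₁² + x₂² = r² equals 4n/((n+1)²Ω^{1/n}) and is
attained at (r, 0). -/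
theorem laneEmden_lyapunov_min_on_circle
    (n : ℕ) (hn : 2 ≤ n) (hne : Even n) (Ω : ℝ) (hΩ : 0 < Ω) (hΩ1 : Ω ≤ 1)
    (r : ℝ) (hr : r = 2 * Ω ^ (-1 / (n : ℝ))) :
    lyapV n Ω r 0 = 4 * (n : ℝ) / (((n : ℝ) + 1) ^ 2 * Ω ^ (1 / (n : ℝ))) ∧
    (∀ x₁ x₂ : ℝ, x₁ ^ 2 + x₂ ^ 2 = r ^ 2 →
      4 * (n : ℝ) / (((n : ℝ) + 1) ^ 2 * Ω ^ (1 / (n : ℝ))) ≤ lyapV n Ω x₁ x₂) := by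
  have hn0 : (n:ℝ) ≠ 0 := by positivity
  set s := Ω ^ (-1 / (n:ℝ)) with hs
  have hspos : 0 < s := Real.rpow_pos_of_pos hΩ _
  have hs1 : 1 ≤ s := by
    rw [hs]
    apply Real.one_le_rpow_of_pos_of_le_one_of_nonpos hΩ hΩ1
    rw [div_nonpos_iff]
    right
    constructor <;> [norm_num; positivity]
  have hsn : s ^ n = Ω⁻¹ := by
    rw [hs, ← Real.rpow_natCast (Ω ^ (-1 / (n:ℝ))) n, ← Real.rpow_mul hΩ.le]
    rw [show (-1 / (n:ℝ)) * n = -1 by field_simp]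
    exact Real.rpow_neg_one Ω
  have hΩs : Ω = (s ^ n)⁻¹ := by rw [hsn, inv_inv]
  have hsm : Ω ^ (-((n:ℝ)+1) / (n:ℝ)) = s ^ (n+1) := by
    rw [hs, ← Real.rpow_natCast (Ω ^ (-1 / (n:ℝ))) (n+1), ← Real.rpow_mul hΩ.le]
    congr 1
    push_cast
    field_simp
  have hΩ1n : Ω ^ (1 / (n:ℝ)) = s⁻¹ := by
    rw [hs, ← Real.rpow_neg hΩ.le, neg_div, neg_neg]
  have hm0 : ((n:ℝ) + 1) ≠ 0 := by positivity
  have hs0 : s ≠ 0 := ne_of_gt hspos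
  constructor
  · rw [lyapV, hr, ← hs, hsm, hΩ1n, hΩs, show 2*s - s = s by ring]
    field_simp
    ring
  · intro x₁ x₂ hx
    have hx2 : x₂ ^ 2 = 4*s^2 - x₁^2 := by rw [hr] at hx; nlinarith
    have hb1 : -(2*s) ≤ x₁ := by nlinarith [sq_nonneg (x₁ + 2*s), sq_nonneg x₂]
    have hb2 : x₁ ≤ 2*s := by nlinarith [sq_nonneg (x₁ - 2*s), sq_nonneg x₂]
    obtain ⟨a, hxa⟩ : ∃ a, x₁ = s * (a + 1) := ⟨x₁ / s - 1, by field_simp; ring⟩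
    subst hxa
    have ha1 : -3 ≤ a := by nlinarith
    have ha2 : a ≤ 1 := by nlinarith
    have hE := keyE n hn hne s a hs1 ha1 ha2
    have hpos : (0:ℝ) < ((n:ℝ)+1)^2 * s^n := by positivity
    have hdiv : 0 ≤ (2*s^(n+1)*(((n:ℝ)+1)*(a-1) + (1 - a^(n+1))) + s^(n+2)*(((n:ℝ)+1)^2*(3+a)*(1-a))) / (((n:ℝ)+1)^2 * s^n) := div_nonneg hE hpos.le
    have hEq : lyapV n Ω (s*(a+1)) x₂ - 4 * (n : ℝ) / (((n : ℝ) + 1) ^ 2 * Ω ^ (1 / (n : ℝ)))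
        = (2*s^(n+1)*(((n:ℝ)+1)*(a-1) + (1 - a^(n+1))) + s^(n+2)*(((n:ℝ)+1)^2*(3+a)*(1-a))) / (((n:ℝ)+1)^2 * s^n) := by
      rw [lyapV, ← hs, hsm, hΩ1n, hΩs, hx2, show s*(a+1) - s = s*a by ring]
      field_simp
      ring
    linarith
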